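/- A monomial ideal I with exactly two minimal monomial generators has a linear resolution if and only if there exist a monomial v and indices i ≠ j in [n] such that I = (v·x_i, v·x_j). -/

import Mathlib

open MvPolynomial

/-- The monomial `x^u` in the polynomial ring `K[x_i : i ∈ σ]`. -/
noncomputable def mon (K : Type) [Field K] {σ : Type} (u : σ →₀ ℕ) :
    MvPolynomial σ K := MvPolynomial.monomial u 1

/-- Total degree of an exponent vector. -/
def mdeg {σ : Type} (u : σ →₀ ℕ) : ℕ := u.sum fun _ e => e

/-- The monomial ideal generated by the monomials with exponent vectors in `S`. -/
noncomputable def monIdeal (K : Type) [Field K] {σ : Type} (S : Set (σ →₀ ℕ)) :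
    Ideal (MvPolynomial σ K) := Ideal.span ((mon K) '' S)

/-- An ideal is generated by variables. -/
def genByVars {K : Type} [Field K] {σ : Type} (J : Ideal (MvPolynomial σ K)) : Prop :=
  ∃ A : Set σ, J = Ideal.span ((fun i => (X i : MvPolynomial σ K)) '' A)

/-- An ideal is generated by linear forms. -/
def genByLinForms {K : Type} [Field K] {σ : Type} (J : Ideal (MvPolynomial σ K)) : Prop :=
  ∃ S : Set (MvPolynomial σ K), (∀ f ∈ S, f.IsHomogeneous 1) ∧ J = Ideal.span S

/-- `S` is an antichain under divisibility of monomials, i.e. it is the minimal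
monomial generating set `G(I)` of the monomial ideal `I` it generates. -/
def IsMinGenSet {σ : Type} (S : Set (σ →₀ ℕ)) : Prop :=
  ∀ u ∈ S, ∀ v ∈ S, u ≤ v → u = v

/-- A monomial ideal, presented by its minimal monomial generating set `S`, is
quasi-linear if for every `u ∈ S` the colon ideal `(G(I) \ {u}) : u` is generated
by variables. -/
def QuasiLinear (K : Type) [Field K] {σ : Type} (S : Set (σ →₀ ℕ)) : Prop :=
  ∀ u ∈ S, genByVars (Submodule.colon (monIdeal K (S \ {u})) (Ideal.span {mon K u}))

/-- A minimal graded free resolution of an ideal `I` in a polynomial ring: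
graded free modules `F i = ⊕_k R(-dg i k)` of rank `b i`, differentials
`F (i+1) → F i` given by the matrices `A i`, whose entries are homogeneous of the
appropriate degree and of positive degree (this is minimality, i.e. all entries lie
in the graded maximal ideal), together with an augmentation `F 0 → I` given by the
homogeneous generators `g`, everything being exact. -/
structure MinFreeRes {K : Type} [Field K] {σ : Type} (I : Ideal (MvPolynomial σ K)) where
  b : ℕ → ℕ
  dg : (i : ℕ) → Fin (b i) → ℕ
  g : Fin (b 0) → MvPolynomial σ K
  A : (i : ℕ) → Matrix (Fin (b i)) (Fin (b (i+1))) (MvPolynomial σ K)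
  g_hom : ∀ k, (g k).IsHomogeneous (dg 0 k)
  A_hom : ∀ i k l, A i k l = 0 ∨
    ((A i k l).IsHomogeneous (dg (i+1) l - dg i k) ∧ dg i k < dg (i+1) l)
  aug_range : LinearMap.range (Fintype.linearCombination (MvPolynomial σ K)
      g) = I
  aug_exact : LinearMap.ker (Fintype.linearCombination (MvPolynomial σ K)
      g) = LinearMap.range ((A 0).mulVecLin)
  is_exact : ∀ i, LinearMap.ker ((A i).mulVecLin) = LinearMap.range ((A (i+1)).mulVecLin)

/-- The graded Betti number `β_{i,j}` read off from a minimal graded free resolution: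
the number of generators of the `i`-th free module of degree `j`. -/
noncomputable def MinFreeRes.beta {K : Type} [Field K] {σ : Type}
    {I : Ideal (MvPolynomial σ K)} (res : MinFreeRes I) (i j : ℕ) : ℕ :=
  (Finset.univ.filter fun k => res.dg i k = j).card

/-- `I` has a `d`-linear resolution: it has a minimal graded free resolution in which the
`i`-th free module is generated entirely in degree `i + d`, i.e. `β_{i,j}(I) = 0`
whenever `j - i ≠ d`. -/
def HasLinRes {K : Type} [Field K] {σ : Type} (I : Ideal (MvPolynomial σ K))
    (d : ℕ) : Prop :=
  ∃ res : MinFreeRes I, ∀ i k, res.dg i k = i + d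

/-- `reg I ≤ r`: a minimal graded free resolution of `I` has all generators of the
`i`-th free module in degrees `≤ i + r`, i.e. `β_{i,j}(I) = 0` whenever `j - i > r`. -/
def RegLE {K : Type} [Field K] {σ : Type} (I : Ideal (MvPolynomial σ K)) (r : ℕ) : Prop :=
  ∃ res : MinFreeRes I, ∀ i k, res.dg i k ≤ i + r

section Aux
variable {K : Type} [Field K] {σ : Type}

lemma mon_mul (a b : σ →₀ ℕ) : mon K a * mon K b = mon K (a + b) := by
  simp [mon, monomial_mul]

lemma mon_ne_zero (a : σ →₀ ℕ) : mon K a ≠ 0 := by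
  simp [mon, monomial_eq_zero]

lemma mdeg_eq_degree (a : σ →₀ ℕ) : mdeg a = a.degree := rfl

lemma mdeg_eq_zero {a : σ →₀ ℕ} : mdeg a = 0 ↔ a = 0 := by
  rw [mdeg_eq_degree, Finsupp.degree_eq_zero_iff]

lemma mon_isHomogeneous (a : σ →₀ ℕ) : (mon K a).IsHomogeneous (mdeg a) :=
  isHomogeneous_monomial _ (mdeg_eq_degree a).symm

lemma mon_dvd_mon {a b : σ →₀ ℕ} : mon K a ∣ mon K b ↔ a ≤ b := by
  simp [mon]

lemma mon_dvd_of_disj {p q : MvPolynomial σ K} {e f : σ →₀ ℕ}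
    (hd : ∀ k, e k = 0 ∨ f k = 0) (h : p * mon K e = q * mon K f) : mon K f ∣ p := by
  classical
  rw [mon, monomial_one_dvd_iff_modMonomial_eq_zero]
  ext m
  rw [coeff_zero]
  by_cases hf : f ≤ m
  · exact coeff_modMonomial_of_le _ hf
  · rw [coeff_modMonomial_of_not_le _ hf]
    have h1 : coeff (m + e) (p * mon K e) = coeff m p := by
      rw [mon, coeff_mul_monomial, mul_one]
    have h2 : coeff (m + e) (q * mon K f) = 0 := by
      rw [mon, coeff_mul_monomial']
      rw [if_neg]
      intro hle
      apply hf
      intro k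
      rcases hd k with h0 | h0
      · have := hle k
        simpa [h0] using this
      · simp [h0]
    rw [← h1, h, h2]

lemma syz {u0 u1 : σ →₀ ℕ} (a b : MvPolynomial σ K)
    (h : a * mon K u0 + b * mon K u1 = 0) :
    ∃ c, a = c * mon K (u1 - u0) ∧ b = -(c * mon K (u0 - u1)) := by
  have key : a * mon K (u0 - u1) = (-b) * mon K (u1 - u0) := by
    have hw : ∀ x y : σ →₀ ℕ, x = (x - (x - y)) + (x - y) := by
      intro x y; ext k
      simp only [Finsupp.coe_add, Finsupp.coe_tsub, Pi.add_apply, Pi.sub_apply]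
      omega
    have h0 : mon K u0 = mon K (u0 - (u0 - u1)) * mon K (u0 - u1) := by
      rw [mon_mul, ← hw]
    have h1 : mon K u1 = mon K (u1 - (u1 - u0)) * mon K (u1 - u0) := by
      rw [mon_mul, ← hw]
    have hmin : u0 - (u0 - u1) = u1 - (u1 - u0) := by
      ext k
      simp only [Finsupp.coe_tsub, Pi.sub_apply]
      omega
    have heq := h
    rw [h0, h1, hmin] at heq
    have h2 : (a * mon K (u0-u1) + b * mon K (u1-u0)) * mon K (u1 - (u1-u0)) = 0 := by
      ring_nf
      ring_nf at heq
      linear_combination heq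
    rcases mul_eq_zero.1 h2 with h3 | h3
    · linear_combination h3
    · exact absurd h3 (mon_ne_zero _)
  have hdisj : ∀ k, (u0 - u1) k = 0 ∨ (u1 - u0) k = 0 := by
    intro k; simp; omega
  obtain ⟨c, hc⟩ := mon_dvd_of_disj hdisj key
  refine ⟨c, by rw [hc]; ring, ?_⟩
  rw [hc] at key
  have h5 : (mon K (u1-u0)) * (c * mon K (u0-u1) - (-b)) = 0 := by
    ring_nf; linear_combination key
  rcases mul_eq_zero.1 h5 with h3 | h3
  · exact absurd h3 (mon_ne_zero _)
  · have h4 := sub_eq_zero.1 h3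
    rw [h4]; ring

lemma comp_mul {g : MvPolynomial σ K} {d : ℕ} (hg : g.IsHomogeneous d)
    (p : MvPolynomial σ K) (n : ℕ) :
    homogeneousComponent (n + d) (p * g) = homogeneousComponent n p * g := by
  classical
  conv_lhs => rw [← sum_homogeneousComponent p]
  rw [Finset.sum_mul, map_sum]
  have hterm : ∀ i, homogeneousComponent (n + d) (homogeneousComponent i p * g)
      = if i = n then homogeneousComponent i p * g else 0 := by
    intro i
    have hh : (homogeneousComponent i p * g).IsHomogeneous (i + d) :=
      (homogeneousComponent_isHomogeneous i p).mul hg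
    rw [homogeneousComponent_of_mem ((mem_homogeneousSubmodule _ _).2 hh)]
    by_cases hi : i = n
    · simp [hi]
    · rw [if_neg (by omega), if_neg hi]
  simp_rw [hterm]
  rw [Finset.sum_ite_eq' (Finset.range (p.totalDegree + 1)) n
    (fun i => homogeneousComponent i p * g)]
  by_cases hn : n ∈ Finset.range (p.totalDegree + 1)
  · rw [if_pos hn]
  · rw [if_neg hn]
    rw [homogeneousComponent_eq_zero _ _
      (by simpa using Nat.lt_of_succ_le (Nat.not_lt.1 (by simpa using hn)))]
    simp

lemma comp_mul_lt {g : MvPolynomial σ K} {d : ℕ} (hg : g.IsHomogeneous d)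
    (p : MvPolynomial σ K) {n : ℕ} (hn : n < d) :
    homogeneousComponent n (p * g) = 0 := by
  classical
  conv_lhs => rw [← sum_homogeneousComponent p]
  rw [Finset.sum_mul, map_sum]
  apply Finset.sum_eq_zero
  intro i _
  have hh : (homogeneousComponent i p * g).IsHomogeneous (i + d) :=
    (homogeneousComponent_isHomogeneous i p).mul hg
  rw [homogeneousComponent_of_mem ((mem_homogeneousSubmodule _ _).2 hh)]
  rw [if_neg (by omega)]

lemma mdeg_one {e : σ →₀ ℕ} (h : mdeg e = 1) : ∃ i, e = Finsupp.single i 1 := by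
  classical
  have hne : e ≠ 0 := by
    intro h0; rw [h0] at h; simp [mdeg] at h
  obtain ⟨i, hi⟩ := Finsupp.ne_iff.1 hne
  simp only [Finsupp.coe_zero, Pi.zero_apply] at hi
  refine ⟨i, ?_⟩
  have his : i ∈ e.support := Finsupp.mem_support_iff.2 hi
  have hsum : ∑ k ∈ e.support, e k = 1 := h
  have hle : e i ≤ 1 := by
    calc e i ≤ ∑ k ∈ e.support, e k := Finset.single_le_sum (fun _ _ => Nat.zero_le _) his
    _ = 1 := hsum
  have hei : e i = 1 := le_antisymm hle (Nat.one_le_iff_ne_zero.2 hi)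
  ext k
  by_cases hk : k = i
  · subst hk; simp [hei]
  · rw [Finsupp.single_apply, if_neg (fun hik => hk hik.symm)]
    by_contra hk0
    have hks : k ∈ e.support := Finsupp.mem_support_iff.2 hk0
    have h2 : 2 ≤ ∑ m ∈ e.support, e m := by
      have h3 := Finset.add_sum_erase _ e his
      rw [← h3]
      have hks' : k ∈ e.support.erase i := Finset.mem_erase.2 ⟨hk, hks⟩
      have h4 : e k ≤ ∑ m ∈ e.support.erase i, e m :=
        Finset.single_le_sum (fun _ _ => Nat.zero_le _) hks'
      omega
    omega

lemma pair_coeff {α β γ δ : K} {u0 u1 : σ →₀ ℕ} (hne : u0 ≠ u1)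
    (h : C α * mon K u0 + C β * mon K u1 = C γ * mon K u0 + C δ * mon K u1) :
    α = γ ∧ β = δ := by
  classical
  have h0 := congrArg (coeff u0) h
  have h1 := congrArg (coeff u1) h
  simp [mon, C_mul_monomial, coeff_monomial, hne, Ne.symm hne, coeff_add] at h0 h1
  exact ⟨h0, h1⟩

end Aux
section Fwd
variable {K : Type} [Field K] {σ : Type}

lemma comp_self {p : MvPolynomial σ K} {d : ℕ} (hp : p.IsHomogeneous d) :
    homogeneousComponent d p = p := by
  rw [homogeneousComponent_of_mem ((mem_homogeneousSubmodule _ _).2 hp), if_pos rfl]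

lemma comp_sum {ι : Type} [Fintype ι] {g : ι → MvPolynomial σ K} {d : ℕ}
    (hgh : ∀ k, (g k).IsHomogeneous d) (p : ι → MvPolynomial σ K) (n : ℕ) :
    homogeneousComponent (n + d) (∑ k, p k * g k)
      = ∑ k, homogeneousComponent n (p k) * g k := by
  rw [map_sum]
  exact Finset.sum_congr rfl fun k _ => comp_mul (hgh k) (p k) n

lemma comp_sum_lt {ι : Type} [Fintype ι] {g : ι → MvPolynomial σ K} {d : ℕ}
    (hgh : ∀ k, (g k).IsHomogeneous d) (p : ι → MvPolynomial σ K) {n : ℕ} (hn : n < d) :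
    homogeneousComponent n (∑ k, p k * g k) = 0 := by
  rw [map_sum]
  exact Finset.sum_eq_zero fun k _ => comp_mul_lt (hgh k) (p k) hn

lemma deg_ge {ι : Type} [Fintype ι] {g : ι → MvPolynomial σ K} {d : ℕ}
    (hgh : ∀ k, (g k).IsHomogeneous d) {w : σ →₀ ℕ} {p : ι → MvPolynomial σ K}
    (hp : ∑ k, p k * g k = mon K w) : d ≤ mdeg w := by
  by_contra hlt
  have h1 := congrArg (homogeneousComponent (mdeg w)) hp
  rw [comp_sum_lt hgh p (Nat.not_le.1 hlt), comp_self (mon_isHomogeneous w)] at h1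
  exact mon_ne_zero w h1.symm

lemma deg_eq_d {ι : Type} [Fintype ι] {g : ι → MvPolynomial σ K} {d : ℕ}
    (hgh : ∀ k, (g k).IsHomogeneous d) {u0 u1 : σ →₀ ℕ}
    (hg_mem : ∀ k, ∃ a b, a * mon K u0 + b * mon K u1 = g k)
    (hm0 : ∃ p : ι → MvPolynomial σ K, ∑ k, p k * g k = mon K u0)
    (hm1 : ∃ q : ι → MvPolynomial σ K, ∑ k, q k * g k = mon K u1)
    (h10 : ¬ u1 ≤ u0) : mdeg u0 = d := by
  obtain ⟨p, hp⟩ := hm0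
  obtain ⟨q, hq⟩ := hm1
  have h0ge : d ≤ mdeg u0 := deg_ge hgh hp
  have h1ge : d ≤ mdeg u1 := deg_ge hgh hq
  by_contra hne0
  have hlt0 : d < mdeg u0 := lt_of_le_of_ne h0ge (fun h => hne0 h.symm)
  by_cases hd1 : mdeg u1 = d
  · have hscal : ∀ k, ∃ β : K, g k = C β * mon K u1 := by
      intro k
      obtain ⟨a, b, hab⟩ := hg_mem k
      have h1 := congrArg (homogeneousComponent d) hab
      rw [comp_self (hgh k), map_add, comp_mul_lt (mon_isHomogeneous u0) _ hlt0,
        zero_add] at h1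
      rw [← hd1, show mdeg u1 = 0 + mdeg u1 from (zero_add _).symm,
        comp_mul (mon_isHomogeneous u1) b 0, homogeneousComponent_zero] at h1
      exact ⟨coeff 0 b, h1.symm⟩
    choose β hβ using hscal
    have hdvd : mon K u1 ∣ mon K u0 := by
      refine ⟨∑ k, p k * C (β k), ?_⟩
      rw [← hp, Finset.mul_sum]
      refine Finset.sum_congr rfl fun k _ => ?_
      rw [hβ k]; ring
    exact h10 (mon_dvd_mon.1 hdvd)
  · have hlt1 : d < mdeg u1 := lt_of_le_of_ne h1ge (fun h => hd1 h.symm)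
    have hz : ∀ k, g k = 0 := by
      intro k
      obtain ⟨a, b, hab⟩ := hg_mem k
      have h1 := congrArg (homogeneousComponent d) hab
      rw [comp_self (hgh k), map_add, comp_mul_lt (mon_isHomogeneous u0) _ hlt0,
        comp_mul_lt (mon_isHomogeneous u1) _ hlt1, zero_add] at h1
      exact h1.symm
    rw [Finset.sum_congr rfl (fun k _ => by rw [hz k, mul_zero]),
      Finset.sum_const_zero] at hp
    exact mon_ne_zero u0 hp.symm

lemma fwd_main {ι ι1 : Type} [Fintype ι] [Fintype ι1] {g : ι → MvPolynomial σ K} {d : ℕ}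
    (hgh : ∀ k, (g k).IsHomogeneous d) {u0 u1 : σ →₀ ℕ}
    (hg_mem : ∀ k, ∃ a b, a * mon K u0 + b * mon K u1 = g k)
    (hm0 : ∃ p : ι → MvPolynomial σ K, ∑ k, p k * g k = mon K u0)
    (hm1 : ∃ q : ι → MvPolynomial σ K, ∑ k, q k * g k = mon K u1)
    (h01 : ¬ u0 ≤ u1) (h10 : ¬ u1 ≤ u0)
    (A : ι → ι1 → MvPolynomial σ K)
    (hAhom : ∀ k l, A k l = 0 ∨ (A k l).IsHomogeneous 1)
    (hcolker : ∀ l, ∑ k, A k l * g k = 0)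
    (hS : ∀ x : ι → MvPolynomial σ K, ∑ k, x k * g k = 0 →
      ∃ w : ι1 → MvPolynomial σ K, ∀ k, x k = ∑ l, A k l * w l) :
    mdeg (u0 - u1) = 1 ∧ mdeg (u1 - u0) = 1 := by
  classical
  have hne : u0 ≠ u1 := fun h => h01 (le_of_eq h)
  have hd0 : mdeg u0 = d := deg_eq_d hgh hg_mem hm0 hm1 h10
  have hd1 : mdeg u1 = d := by
    refine deg_eq_d hgh ?_ hm1 hm0 h01
    intro k
    obtain ⟨a, b, hab⟩ := hg_mem k
    exact ⟨b, a, by rw [← hab]; ring⟩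
  obtain ⟨p, hp⟩ := hm0
  obtain ⟨q, hq⟩ := hm1
  -- scalar coefficients expressing the monomials in terms of the g k
  have hA0 : ∀ (x : ι → MvPolynomial σ K) (w : σ →₀ ℕ), mdeg w = d →
      (∑ k, x k * g k = mon K w) → ∑ k, C (coeff 0 (x k)) * g k = mon K w := by
    intro x w hwd hx
    have h1 := congrArg (homogeneousComponent (0 + d)) hx
    rw [comp_sum hgh x 0] at h1
    rw [zero_add, ← hwd, comp_self (mon_isHomogeneous w)] at h1
    simp_rw [homogeneousComponent_zero] at h1
    exact h1
  have hA : ∑ k, C (coeff 0 (p k)) * g k = mon K u0 := hA0 p u0 hd0 hp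
  have hB : ∑ k, C (coeff 0 (q k)) * g k = mon K u1 := hA0 q u1 hd1 hq
  set a : ι → K := fun k => coeff 0 (p k) with ha
  set b : ι → K := fun k => coeff 0 (q k) with hb
  -- each g k is a scalar combination of the two monomials
  have hscal : ∀ k, ∃ γ δ : K, g k = C γ * mon K u0 + C δ * mon K u1 := by
    intro k
    obtain ⟨x, y, hxy⟩ := hg_mem k
    have h2 := congrArg (homogeneousComponent (0 + d)) hxy
    rw [map_add] at h2
    nth_rewrite 2 [show (0:ℕ) + d = 0 + mdeg u1 by rw [hd1]] at h2
    nth_rewrite 1 [show (0:ℕ) + d = 0 + mdeg u0 by rw [hd0]] at h2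
    rw [comp_mul (mon_isHomogeneous u0) x 0, comp_mul (mon_isHomogeneous u1) y 0,
      homogeneousComponent_zero, homogeneousComponent_zero, zero_add,
      comp_self (hgh k)] at h2
    exact ⟨coeff 0 x, coeff 0 y, h2.symm⟩
  choose c e hce using hscal
  -- rewriting scalar combinations
  have hsum : ∀ (x : ι → K), ∑ k, C (x k) * g k
      = C (∑ k, x k * c k) * mon K u0 + C (∑ k, x k * e k) * mon K u1 := by
    intro x
    rw [map_sum, map_sum, Finset.sum_mul, Finset.sum_mul, ← Finset.sum_add_distrib]
    refine Finset.sum_congr rfl fun k _ => ?_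
    rw [hce k, map_mul, map_mul]
    ring
  have r10 := (hsum a).symm.trans hA
  have r20 := (hsum b).symm.trans hB
  have r1 : ∑ k, a k * c k = 1 ∧ ∑ k, a k * e k = 0 := by
    have := pair_coeff hne (r10.trans (by simp) :
      C (∑ k, a k * c k) * mon K u0 + C (∑ k, a k * e k) * mon K u1
        = C 1 * mon K u0 + C 0 * mon K u1)
    exact ⟨this.1, this.2⟩
  have r2 : ∑ k, b k * c k = 0 ∧ ∑ k, b k * e k = 1 := by
    have := pair_coeff hne (r20.trans (by simp) :
      C (∑ k, b k * c k) * mon K u0 + C (∑ k, b k * e k) * mon K u1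
        = C 0 * mon K u0 + C 1 * mon K u1)
    exact ⟨this.1, this.2⟩
  -- columns of A are syzygies
  have hPQ : ∀ l, (∑ k, A k l * C (c k)) * mon K u0 + (∑ k, A k l * C (e k)) * mon K u1 = 0 := by
    intro l
    rw [← hcolker l, Finset.sum_mul, Finset.sum_mul, ← Finset.sum_add_distrib]
    refine Finset.sum_congr rfl fun k _ => ?_
    rw [hce k]
    ring
  choose r hr1 hr2 using fun l => syz _ _ (hPQ l)
  -- the canonical syzygy, expressed in the generators g
  set S : ι → MvPolynomial σ K :=
    fun k => C (a k) * mon K (u1 - u0) - C (b k) * mon K (u0 - u1) with hs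
  have hmax : (u1 - u0) + u0 = (u0 - u1) + u1 := by
    ext k'
    simp only [Finsupp.coe_add, Finsupp.coe_tsub, Pi.add_apply, Pi.sub_apply]
    omega
  have hSker : ∑ k, S k * g k = 0 := by
    have e1 : ∑ k, S k * g k
        = mon K (u1 - u0) * (∑ k, C (a k) * g k) - mon K (u0 - u1) * (∑ k, C (b k) * g k) := by
      rw [Finset.mul_sum, Finset.mul_sum, ← Finset.sum_sub_distrib]
      refine Finset.sum_congr rfl fun k _ => ?_
      rw [hs]
      ring
    rw [e1, hA, hB, mon_mul, mon_mul, hmax, sub_self]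
  obtain ⟨w, hw⟩ := hS S hSker
  -- compute ∑ C (c k) * S k in two ways
  have way1 : ∑ k, C (c k) * S k = mon K (u1 - u0) := by
    have e1 : ∑ k, C (c k) * S k
        = C (∑ k, a k * c k) * mon K (u1 - u0) - C (∑ k, b k * c k) * mon K (u0 - u1) := by
      rw [map_sum, map_sum, Finset.sum_mul, Finset.sum_mul, ← Finset.sum_sub_distrib]
      refine Finset.sum_congr rfl fun k _ => ?_
      rw [hs, map_mul, map_mul]
      ring
    rw [e1, r1.1, r2.1]
    simp
  have way2 : ∑ k, C (c k) * S k = (∑ l, r l * w l) * mon K (u1 - u0) := by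
    calc ∑ k, C (c k) * S k = ∑ k, ∑ l, (A k l * C (c k)) * w l := by
          refine Finset.sum_congr rfl fun k _ => ?_
          rw [hw k, Finset.mul_sum]
          exact Finset.sum_congr rfl fun l _ => by ring
      _ = ∑ l, (∑ k, A k l * C (c k)) * w l := by
          rw [Finset.sum_comm]
          exact Finset.sum_congr rfl fun l _ => by rw [Finset.sum_mul]
      _ = ∑ l, (r l * w l) * mon K (u1 - u0) := by
          refine Finset.sum_congr rfl fun l _ => ?_
          rw [hr1 l]
          ring
      _ = (∑ l, r l * w l) * mon K (u1 - u0) := by rw [Finset.sum_mul]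
  have hone : ∑ l, r l * w l = 1 := by
    have h3 : (1 - ∑ l, r l * w l) * mon K (u1 - u0) = 0 := by
      rw [sub_mul, one_mul, ← way2, way1, sub_self]
    rcases mul_eq_zero.1 h3 with h4 | h4
    · have := sub_eq_zero.1 h4
      exact this.symm
    · exact absurd h4 (mon_ne_zero _)
  obtain ⟨l0, _, hl0⟩ := Finset.exists_ne_zero_of_sum_ne_zero
    (by rw [hone]; exact one_ne_zero : ∑ l, r l * w l ≠ 0)
  have hr0 : r l0 ≠ 0 := left_ne_zero_of_mul hl0
  -- homogeneity of the two column combinations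
  have hhomcomb : ∀ (x : ι → K), (∑ k, A k l0 * C (x k)).IsHomogeneous 1 := by
    intro x
    refine IsHomogeneous.sum _ _ _ fun k _ => ?_
    rcases hAhom k l0 with h5 | h5
    · rw [h5, zero_mul]
      exact isHomogeneous_zero _ _ _
    · simpa using h5.mul (isHomogeneous_C σ (x k))
  -- key final degree computation
  have hdeg : ∀ (x : ι → K) (f : σ →₀ ℕ) (ρ : MvPolynomial σ K), ρ ≠ 0 →
      (∑ k, A k l0 * C (x k)) = ρ * mon K f → mdeg f ≤ 1 := by
    intro x f ρ hρ hf
    by_contra h6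
    have h7 : (1 : ℕ) < mdeg f := Nat.not_le.1 h6
    have h8 := comp_self (hhomcomb x)
    rw [hf, comp_mul_lt (mon_isHomogeneous f) ρ h7] at h8
    exact mul_ne_zero hρ (mon_ne_zero f) h8.symm
  have he1 : mdeg (u1 - u0) ≤ 1 := hdeg c _ _ hr0 (hr1 l0)
  have he0 : mdeg (u0 - u1) ≤ 1 := by
    refine hdeg e _ (-(r l0)) (neg_ne_zero.2 hr0) ?_
    rw [hr2 l0]
    ring
  have hz1 : mdeg (u1 - u0) ≠ 0 := by
    rw [Ne, mdeg_eq_zero, tsub_eq_zero_iff_le]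
    exact h10
  have hz0 : mdeg (u0 - u1) ≠ 0 := by
    rw [Ne, mdeg_eq_zero, tsub_eq_zero_iff_le]
    exact h01
  omega

end Fwd

-- auxiliary lemmas re-added
section Aux2
variable {K : Type} [Field K] {σ : Type}

lemma mdeg_add (a b : σ →₀ ℕ) : mdeg (a + b) = mdeg a + mdeg b := by
  simp [mdeg, Finsupp.sum_add_index']

lemma mdeg_single (i : σ) (e : ℕ) : mdeg (Finsupp.single i e) = e := by
  simp [mdeg]

end Aux2

/-- Ranks of the free modules in the resolution of an ideal generated by two monomials. -/
@[reducible] def resB : ℕ → ℕ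
  | 0 => 2
  | 1 => 1
  | _+2 => 0

/-- The differentials. -/
noncomputable def resA (K : Type) [Field K] {σ : Type} (i j : σ) :
    (m : ℕ) → Matrix (Fin (resB m)) (Fin (resB (m+1))) (MvPolynomial σ K)
  | 0 => fun k _ => if (k : ℕ) = 0 then mon K (Finsupp.single j 1) else -(mon K (Finsupp.single i 1))
  | _+1 => 0

section Bwd
variable {K : Type} [Field K] {σ : Type}

lemma fin2 : ∀ k : Fin 2, k = 0 ∨ k = 1 := by decide

lemma bwd {u : Fin 2 → (σ →₀ ℕ)} {v : σ →₀ ℕ} {i j : σ} (hij : i ≠ j)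
    (h0 : u 0 = v + Finsupp.single i 1) (h1 : u 1 = v + Finsupp.single j 1) :
    HasLinRes (monIdeal K (Set.range u)) (mdeg v + 1) := by
  classical
  set d := mdeg v + 1 with hd
  set R := MvPolynomial σ K with hR
  -- subtraction facts
  have hsub0 : u 0 - u 1 = Finsupp.single i 1 := by
    rw [h0, h1]
    ext k
    simp only [Finsupp.coe_tsub, Pi.sub_apply, Finsupp.coe_add, Pi.add_apply,
      Finsupp.single_apply]
    rcases eq_or_ne i k with hik | hik
    · rcases eq_or_ne j k with hjk | hjk
      · exact absurd (hik.trans hjk.symm) hij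
      · simp [hik, hjk]
    · simp [hik]
  have hsub1 : u 1 - u 0 = Finsupp.single j 1 := by
    rw [h0, h1]
    ext k
    simp only [Finsupp.coe_tsub, Pi.sub_apply, Finsupp.coe_add, Pi.add_apply,
      Finsupp.single_apply]
    rcases eq_or_ne j k with hjk | hjk
    · rcases eq_or_ne i k with hik | hik
      · exact absurd (hik.trans hjk.symm) hij
      · simp [hik, hjk]
    · simp [hjk]
  have hmdeg : ∀ k : Fin 2, mdeg (u k) = d := by
    intro k
    rcases fin2 k with rfl | rfl
    · rw [h0, mdeg_add, mdeg_single]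
    · rw [h1, mdeg_add, mdeg_single]
  refine ⟨{
    b := resB
    dg := fun m _ => m + d
    g := fun k => mon K (u k)
    A := resA K i j
    g_hom := ?_
    A_hom := ?_
    aug_range := ?_
    aug_exact := ?_
    is_exact := ?_ }, fun m k => rfl⟩
  · intro k
    have := mon_isHomogeneous (K := K) (u k)
    rwa [hmdeg k, show d = 0 + d from (zero_add d).symm] at this
  · intro m k l
    match m with
    | 0 =>
      right
      constructor
      · have h2 : (1 + d) - (0 + d) = 1 := by omega
        show (resA K i j 0 k l).IsHomogeneous ((1 + d) - (0 + d))
        rw [h2]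
        show (if (k : ℕ) = 0 then mon K (Finsupp.single j 1)
          else -(mon K (Finsupp.single i 1))).IsHomogeneous 1
        by_cases hk : (k : ℕ) = 0
        · rw [if_pos hk]
          have := mon_isHomogeneous (K := K) (Finsupp.single j 1)
          rwa [mdeg_single] at this
        · rw [if_neg hk]
          apply MvPolynomial.IsHomogeneous.neg
          have := mon_isHomogeneous (K := K) (Finsupp.single i 1)
          rwa [mdeg_single] at this
      · show (0:ℕ) + d < (0+1) + d
        omega
    | m+1 => exact Fin.elim0 l
  · rw [Fintype.range_linearCombination, monIdeal, ← Set.range_comp]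
    rfl
  · ext x
    rw [LinearMap.mem_ker, LinearMap.mem_range]
    rw [Fintype.linearCombination_apply]
    rw [Fin.sum_univ_two]
    simp only [smul_eq_mul]
    constructor
    · intro hx
      obtain ⟨c, hc0, hc1⟩ := syz _ _ hx
      refine ⟨fun _ => c, ?_⟩
      funext k
      rw [Matrix.mulVecLin_apply]
      rcases fin2 k with rfl | rfl
      · show ∑ l : Fin 1, resA K i j 0 0 l * c = x 0
        rw [Fin.sum_univ_one]
        show (if ((0 : Fin 2) : ℕ) = 0 then mon K (Finsupp.single j 1)
          else -(mon K (Finsupp.single i 1))) * c = x 0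
        rw [if_pos (show ((0 : Fin 2) : ℕ) = 0 from rfl), hc0, hsub1]
        ring
      · show ∑ l : Fin 1, resA K i j 0 1 l * c = x 1
        rw [Fin.sum_univ_one]
        show (if ((1 : Fin 2) : ℕ) = 0 then mon K (Finsupp.single j 1)
          else -(mon K (Finsupp.single i 1))) * c = x 1
        rw [if_neg (by decide), hc1, hsub0]
        ring
    · rintro ⟨w, rfl⟩
      rw [Matrix.mulVecLin_apply]
      show (∑ l : Fin 1, resA K i j 0 0 l * w l) * mon K (u 0)
        + (∑ l : Fin 1, resA K i j 0 1 l * w l) * mon K (u 1) = 0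
      rw [Fin.sum_univ_one, Fin.sum_univ_one]
      show (if ((0 : Fin 2) : ℕ) = 0 then mon K (Finsupp.single j 1)
          else -(mon K (Finsupp.single i 1))) * w 0 * mon K (u 0)
        + (if ((1 : Fin 2) : ℕ) = 0 then mon K (Finsupp.single j 1)
          else -(mon K (Finsupp.single i 1))) * w 0 * mon K (u 1) = 0
      rw [if_pos (show ((0 : Fin 2) : ℕ) = 0 from rfl), if_neg (by decide)]
      have hkey : Finsupp.single j 1 + u 0 = Finsupp.single i 1 + u 1 := by
        rw [h0, h1]
        ext k
        simp only [Finsupp.coe_add, Pi.add_apply]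
        ring
      calc mon K (Finsupp.single j 1) * w 0 * mon K (u 0)
            + -(mon K (Finsupp.single i 1)) * w 0 * mon K (u 1)
          = w 0 * (mon K (Finsupp.single j 1) * mon K (u 0)
            - mon K (Finsupp.single i 1) * mon K (u 1)) := by ring
        _ = 0 := by rw [mon_mul, mon_mul, hkey, sub_self, mul_zero]
  · intro m
    match m with
    | 0 =>
      have hrange : LinearMap.range ((resA K i j 1).mulVecLin) = ⊥ := by
        rw [LinearMap.range_eq_bot]
        apply LinearMap.ext
        intro w
        funext k
        show ∑ l : Fin 0, resA K i j 1 k l * w l = 0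
        simp
      rw [hrange, LinearMap.ker_eq_bot']
      intro x hx
      have h2 := congrFun hx 0
      rw [Matrix.mulVecLin_apply] at h2
      have h3 : (∑ l : Fin 1, resA K i j 0 0 l * x l) = 0 := h2
      rw [Fin.sum_univ_one] at h3
      have h4 : (if ((0 : Fin 2) : ℕ) = 0 then mon K (Finsupp.single j 1)
          else -(mon K (Finsupp.single i 1))) * x 0 = 0 := h3
      rw [if_pos (show ((0 : Fin 2) : ℕ) = 0 from rfl)] at h4
      funext l
      have hl0 : l = 0 := Subsingleton.elim l 0
      rw [hl0]
      rcases mul_eq_zero.1 h4 with h5 | h5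
      · exact absurd h5 (mon_ne_zero _)
      · exact h5
    | m+1 =>
      have hallbot : ∀ (N : Submodule R (Fin (resB (m+1+1)) → R)), N = ⊥ := by
        intro N
        ext x
        have hx : x = 0 := funext fun idx => (Fin.elim0 idx : _)
        rw [hx]
        simp
        have hz : (![] : Fin 0 → R) = 0 := Subsingleton.elim _ _
        exact hz ▸ N.zero_mem
      exact (hallbot _).trans (hallbot _).symm

end Bwd

/-- A monomial ideal `I` with exactly two minimal monomial generators
has a linear resolution if and only if there exist a monomial `v` and indices `i ≠ j`
in `[n]` such that `I = (v·x_i, v·x_j)`. -/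
theorem stmt_5 {K : Type} [Field K] {n : ℕ} (u : Fin 2 → (Fin n →₀ ℕ))
    (hinj : Function.Injective u) (hmin : IsMinGenSet (Set.range u)) :
    (∃ d, HasLinRes (monIdeal K (Set.range u)) d)
    ↔ ∃ (v : Fin n →₀ ℕ) (i j : Fin n), i ≠ j ∧
        Set.range u = {v + Finsupp.single i 1, v + Finsupp.single j 1} := by
  classical
  have hne : u 0 ≠ u 1 := fun h => absurd (hinj h) (by decide)
  have hrange2 : Set.range u = {u 0, u 1} := by
    ext x
    simp only [Set.mem_range, Fin.exists_fin_two, Set.mem_insert_iff,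
      Set.mem_singleton_iff, eq_comm]
  constructor
  · rintro ⟨d, res0, hdg0⟩
    obtain ⟨b, dgf, g, A, ghom0, Ahom0, ar, ae, ie⟩ := res0
    have hdg : ∀ i k, dgf i k = i + d := hdg0
    have ghom : ∀ k, (g k).IsHomogeneous (dgf 0 k) := ghom0
    have Ahom : ∀ i k l, A i k l = 0 ∨
        ((A i k l).IsHomogeneous (dgf (i+1) l - dgf i k) ∧ dgf i k < dgf (i+1) l) := Ahom0
    have h01 : ¬ u 0 ≤ u 1 := fun hle => hne (hmin _ ⟨0, rfl⟩ _ ⟨1, rfl⟩ hle)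
    have h10 : ¬ u 1 ≤ u 0 := fun hle => hne ((hmin _ ⟨1, rfl⟩ _ ⟨0, rfl⟩ hle).symm)
    have hI : monIdeal K (Set.range u) = Ideal.span {mon K (u 0), mon K (u 1)} := by
      rw [monIdeal, hrange2, Set.image_pair]
    have hgh : ∀ k, (g k).IsHomogeneous d := fun k => by
      have h := ghom k
      rwa [hdg 0 k, zero_add] at h
    have hlin : ∀ x : Fin (b 0) → MvPolynomial (Fin n) K,
        Fintype.linearCombination (MvPolynomial (Fin n) K) g x
          = ∑ k, x k * g k := by
      intro x
      rw [Fintype.linearCombination_apply]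
      exact Finset.sum_congr rfl fun k _ => rfl
    have har : LinearMap.range (Fintype.linearCombination (MvPolynomial (Fin n) K)
        g) = Ideal.span {mon K (u 0), mon K (u 1)} := by
      rw [← hI]; exact ar
    have hg_mem : ∀ k, ∃ a c, a * mon K (u 0) + c * mon K (u 1) = g k := by
      intro k
      rw [← Ideal.mem_span_pair, ← har]
      exact ⟨Pi.single k 1, by rw [Fintype.linearCombination_apply_single, one_smul]⟩
    have hm : ∀ t : Fin 2, ∃ p : Fin (b 0) → MvPolynomial (Fin n) K,
        ∑ k, p k * g k = mon K (u t) := by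
      intro t
      have hmem : mon K (u t) ∈ LinearMap.range (Fintype.linearCombination
          (MvPolynomial (Fin n) K) g) := by
        rw [har]
        apply Ideal.subset_span
        rcases fin2 t with rfl | rfl
        · exact Set.mem_insert _ _
        · exact Set.mem_insert_of_mem _ rfl
      obtain ⟨p, hp⟩ := hmem
      exact ⟨p, by rw [← hlin p]; exact hp⟩
    have hAhom : ∀ k l, A 0 k l = 0 ∨ (A 0 k l).IsHomogeneous 1 := by
      intro k l
      rcases Ahom 0 k l with h | h
      · exact Or.inl h
      · right
        have hsub : dgf (0+1) l - dgf 0 k = 1 := by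
          rw [hdg, hdg]; omega
        have h2 := h.1
        rwa [hsub] at h2
    have hcolker : ∀ l, ∑ k, A 0 k l * g k = 0 := by
      intro l
      have hcolmem : (fun k => A 0 k l) ∈ LinearMap.range ((A 0).mulVecLin) := by
        refine ⟨Pi.single l 1, ?_⟩
        rw [Matrix.mulVecLin_apply, Matrix.mulVec_single]
        simp
        rfl
      rw [← ae, LinearMap.mem_ker, hlin] at hcolmem
      exact hcolmem
    have hS : ∀ x : Fin (b 0) → MvPolynomial (Fin n) K,
        ∑ k, x k * g k = 0 → ∃ w : Fin (b 1) → MvPolynomial (Fin n) K,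
          ∀ k, x k = ∑ l, A 0 k l * w l := by
      intro x hx
      have hker : x ∈ LinearMap.ker (Fintype.linearCombination
          (MvPolynomial (Fin n) K) g) := by
        rw [LinearMap.mem_ker, hlin]
        exact hx
      rw [ae] at hker
      obtain ⟨w, hw⟩ := hker
      refine ⟨w, fun k => ?_⟩
      rw [← hw, Matrix.mulVecLin_apply]
      rfl
    obtain ⟨hd01, hd10⟩ := fwd_main hgh hg_mem (hm 0) (hm 1) h01 h10
      (fun k l => A 0 k l) hAhom hcolker hS
    obtain ⟨i, hi⟩ := mdeg_one hd01
    obtain ⟨j, hj⟩ := mdeg_one hd10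
    refine ⟨u 0 - (u 0 - u 1), i, j, ?_, ?_⟩
    · intro hij
      apply hne
      subst hij
      ext k
      have h2 := DFunLike.congr_fun hi k
      have h3 := DFunLike.congr_fun hj k
      rw [Finsupp.tsub_apply] at h2 h3
      omega
    · rw [hrange2]
      have e0 : u 0 = (u 0 - (u 0 - u 1)) + Finsupp.single i 1 := by
        rw [← hi]
        ext k
        simp only [Finsupp.coe_add, Finsupp.coe_tsub, Pi.add_apply, Pi.sub_apply]
        omega
      have e1 : u 1 = (u 0 - (u 0 - u 1)) + Finsupp.single j 1 := by
        rw [← hj]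
        ext k
        simp only [Finsupp.coe_add, Finsupp.coe_tsub, Pi.add_apply, Pi.sub_apply]
        omega
      rw [← e0, ← e1]
  · rintro ⟨v, i, j, hij, hr⟩
    have h0mem : u 0 ∈ ({v + Finsupp.single i 1, v + Finsupp.single j 1} :
        Set (Fin n →₀ ℕ)) := by rw [← hr]; exact ⟨0, rfl⟩
    have h1mem : u 1 ∈ ({v + Finsupp.single i 1, v + Finsupp.single j 1} :
        Set (Fin n →₀ ℕ)) := by rw [← hr]; exact ⟨1, rfl⟩
    rcases h0mem with h0 | h0 <;> rcases h1mem with h1 | h1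
    · exact absurd (h0.trans h1.symm) hne
    · exact ⟨_, bwd hij h0 h1⟩
    · exact ⟨_, bwd hij.symm h0 h1⟩
    · exact absurd (h0.trans h1.symm) hne
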